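/- arXiv:1606.00236 — 5 statements merged into one kernel-verified Lean document; each statement's English description precedes it below -/
import Mathlib

section
/- Let $(Z_n)_{n\ge 0}$ be a real-valued stochastic process with stationary increments and $Z_0=0$. Then for every $n\ge 1$, $n\,\mathbb{P}(\min_{1\le \ell \le n}|Z_\ell|\ge 1) \le \mathbb{E}[\max_{1\le k\le n} Z_k - \min_{1\le k\le n} Z_k] + 2$. -/
open MeasureTheory Filter Finset

noncomputable section

/-- A process has stationary increments if for every `k`, the shifted-increment
process `(Z_{n+k} - Z_k)_n` has the same law (as a process) as `(Z_n)_n`. -/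
def HasStationaryIncrements {Ω : Type*} [MeasurableSpace Ω] (μ : Measure Ω)
    (Z : ℕ → Ω → ℝ) : Prop :=
  ∀ k : ℕ, Measure.map (fun ω => fun n => Z (n + k) ω - Z k ω) μ
    = Measure.map (fun ω => fun n => Z n ω) μ

/-- A finite set of reals that is pairwise 1-separated and contained in `[a,b]`
has at most `b - a + 1` elements. -/
lemma sep_card_le_aux : ∀ (N : ℕ) (T : Finset ℝ), T.card ≤ N →
    (∀ x ∈ T, ∀ y ∈ T, x ≠ y → 1 ≤ |x - y|) →
    ∀ a b : ℝ, a ≤ b → (∀ x ∈ T, a ≤ x ∧ x ≤ b) → (T.card : ℝ) ≤ b - a + 1 := by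
  intro N
  induction N with
  | zero =>
    intro T hT _ a b hab _
    interval_cases h : T.card
    · simp; linarith
  | succ N ihN =>
    intro T hT hsep a b hab hmem
    rcases T.eq_empty_or_nonempty with rfl | hne
    · simp; linarith
    · set x0 := T.min' hne with hx0
      have hx0T : x0 ∈ T := T.min'_mem hne
      have hcard : (T.erase x0).card = T.card - 1 := Finset.card_erase_of_mem hx0T
      rcases (T.erase x0).eq_empty_or_nonempty with he | hne'
      · have h1 : T.card = 1 := by
          have h2 : (T.erase x0).card = 0 := by rw [he]; simp
          have h3 : 1 ≤ T.card := Finset.card_pos.mpr hne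
          omega
        rw [h1]; push_cast; linarith
      · have key : ∀ x ∈ T.erase x0, x0 + 1 ≤ x ∧ x ≤ b := by
          intro x hx
          have hxT := Finset.mem_of_mem_erase hx
          have hne2 : x ≠ x0 := Finset.ne_of_mem_erase hx
          have h1 := hsep x hxT x0 hx0T hne2
          have hge : x0 ≤ x := T.min'_le x hxT
          rw [abs_of_nonneg (by linarith)] at h1
          exact ⟨by linarith, (hmem x hxT).2⟩
        have hab' : x0 + 1 ≤ b := by
          obtain ⟨y, hy⟩ := hne'; have := key y hy; linarith
        have hsep' : ∀ x ∈ T.erase x0, ∀ y ∈ T.erase x0, x ≠ y → 1 ≤ |x - y| :=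
          fun x hx y hy hxy => hsep x (Finset.mem_of_mem_erase hx) y (Finset.mem_of_mem_erase hy) hxy
        have hN : (T.erase x0).card ≤ N := by omega
        have hIH := ihN (T.erase x0) hN hsep' (x0 + 1) b hab' key
        have hax0 : a ≤ x0 := (hmem x0 hx0T).1
        have hc1 : 1 ≤ T.card := Finset.card_pos.mpr hne
        have : (T.card : ℝ) = (T.erase x0).card + 1 := by rw [hcard]; push_cast [hc1]; ring
        rw [this]; linarith

theorem stmt0 {Ω : Type*} [MeasurableSpace Ω] (μ : Measure Ω) [IsProbabilityMeasure μ]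
    (Z : ℕ → Ω → ℝ) (hmeas : ∀ n, Measurable (Z n)) (hZ0 : ∀ ω, Z 0 ω = 0)
    (hstat : HasStationaryIncrements μ Z)
    (hintmax : ∀ n, Integrable (fun ω => ⨆ k : Finset.Icc 1 n, Z k.1 ω) μ)
    (hintmin : ∀ n, Integrable (fun ω => ⨅ k : Finset.Icc 1 n, Z k.1 ω) μ)
    (n : ℕ) (hn : 1 ≤ n) :
    (n : ℝ) * (μ {ω | ∀ ℓ ∈ Finset.Icc 1 n, 1 ≤ |Z ℓ ω|}).toReal
      ≤ (∫ ω, ((⨆ k : Finset.Icc 1 n, Z k.1 ω) - ⨅ k : Finset.Icc 1 n, Z k.1 ω) ∂μ) + 2 := by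
  classical
  have h1Icc : (1 : ℕ) ∈ Finset.Icc 1 n := by simp [hn]
  haveI : Nonempty (Finset.Icc 1 n : Finset ℕ) := ⟨⟨1, h1Icc⟩⟩
  set M : Ω → ℝ := fun ω => ⨆ k : (Finset.Icc 1 n : Finset ℕ), Z k.1 ω with hM
  set m : Ω → ℝ := fun ω => ⨅ k : (Finset.Icc 1 n : Finset ℕ), Z k.1 ω with hm
  set E : Set Ω := {ω | ∀ ℓ ∈ Finset.Icc 1 n, 1 ≤ |Z ℓ ω|} with hE
  set A : ℕ → Set Ω := fun k => {ω | ∀ ℓ ∈ Finset.Icc 1 n, 1 ≤ |Z (ℓ + k) ω - Z k ω|} with hA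
  have hmeasA : ∀ k, MeasurableSet (A k) := by
    intro k
    have heq : A k = ⋂ ℓ ∈ Finset.Icc 1 n, {ω | 1 ≤ |Z (ℓ + k) ω - Z k ω|} := by
      ext ω; simp [hA]
    rw [heq]
    exact MeasurableSet.biInter (Finset.Icc 1 n).countable_toSet (fun ℓ _ =>
      measurableSet_le measurable_const ((hmeas (ℓ + k)).sub (hmeas k)).abs)
  set B : Set (ℕ → ℝ) := {f | ∀ ℓ ∈ Finset.Icc 1 n, 1 ≤ |f ℓ|} with hB
  have hmeasB : MeasurableSet B := by
    have heq : B = ⋂ ℓ ∈ Finset.Icc 1 n, {f : ℕ → ℝ | 1 ≤ |f ℓ|} := by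
      ext f; simp [hB]
    rw [heq]
    exact MeasurableSet.biInter (Finset.Icc 1 n).countable_toSet (fun ℓ _ =>
      measurableSet_le measurable_const (measurable_pi_apply ℓ).abs)
  have hμA : ∀ k, μ (A k) = μ E := by
    intro k
    have h1 : Measurable (fun ω => fun j => Z (j + k) ω - Z k ω) :=
      measurable_pi_lambda _ (fun j => (hmeas (j + k)).sub (hmeas k))
    have h2 : Measurable (fun ω => fun j => Z j ω) := measurable_pi_lambda _ hmeas
    have e1 : A k = (fun ω => fun j => Z (j + k) ω - Z k ω) ⁻¹' B := rfl
    have e2 : E = (fun ω => fun j => Z j ω) ⁻¹' B := rfl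
    rw [e1, e2, ← Measure.map_apply h1 hmeasB, ← Measure.map_apply h2 hmeasB, hstat k]
  -- pointwise bound
  have hpoint : ∀ ω, (∑ k ∈ Finset.range n, (A k).indicator (fun _ => (1:ℝ)) ω)
      ≤ M ω - m ω + 2 := by
    intro ω
    have hbddA : BddAbove (Set.range fun j : (Finset.Icc 1 n : Finset ℕ) => Z j.1 ω) :=
      (Set.finite_range _).bddAbove
    have hbddB : BddBelow (Set.range fun j : (Finset.Icc 1 n : Finset ℕ) => Z j.1 ω) :=
      (Set.finite_range _).bddBelow
    have hle : ∀ k (hk : k ∈ Finset.Icc 1 n), m ω ≤ Z k ω ∧ Z k ω ≤ M ω := by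
      intro k hk
      exact ⟨ciInf_le hbddB ⟨k, hk⟩, le_ciSup hbddA ⟨k, hk⟩⟩
    have hmM : m ω ≤ M ω := (hle 1 h1Icc).1.trans (hle 1 h1Icc).2
    set S := (Finset.range n).filter (fun k => ω ∈ A k) with hS
    have hsum : (∑ k ∈ Finset.range n, (A k).indicator (fun _ => (1:ℝ)) ω) = S.card := by
      rw [hS, Finset.card_filter]
      push_cast
      refine Finset.sum_congr rfl (fun k _ => ?_)
      by_cases h : ω ∈ A k <;> simp [Set.indicator_apply, h]
    rw [hsum]
    have hsepS : ∀ k ∈ S, ∀ k' ∈ S, k < k' → 1 ≤ |Z k' ω - Z k ω| := by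
      intro k hk k' hk' hlt
      rw [hS, Finset.mem_filter, Finset.mem_range] at hk hk'
      have hℓ : k' - k ∈ Finset.Icc 1 n := by rw [Finset.mem_Icc]; omega
      have h := hk.2 (k' - k) hℓ
      rwa [Nat.sub_add_cancel hlt.le] at h
    set S' := S.erase 0 with hS'
    set T := S'.image (fun k => Z k ω) with hT
    have hsepS' : ∀ k ∈ S', ∀ k' ∈ S', k ≠ k' → 1 ≤ |Z k' ω - Z k ω| := by
      intro k hk k' hk' hkk
      have hkS := Finset.mem_of_mem_erase hk
      have hkS' := Finset.mem_of_mem_erase hk'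
      rcases lt_or_gt_of_ne hkk with h | h
      · exact hsepS k hkS k' hkS' h
      · rw [abs_sub_comm]; exact hsepS k' hkS' k hkS h
    have hinj : Set.InjOn (fun k => Z k ω) S' := by
      intro k hk k' hk' heq
      by_contra hne
      have := hsepS' k (by simpa using hk) k' (by simpa using hk') hne
      simp only at heq
      rw [heq, sub_self, abs_zero] at this
      linarith
    have hcardT : T.card = S'.card := Finset.card_image_of_injOn hinj
    have hTsep : ∀ x ∈ T, ∀ y ∈ T, x ≠ y → 1 ≤ |x - y| := by
      intro x hx y hy hxy
      rw [hT, Finset.mem_image] at hx hy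
      obtain ⟨k, hk, rfl⟩ := hx
      obtain ⟨k', hk', rfl⟩ := hy
      have : k ≠ k' := by rintro rfl; exact hxy rfl
      rw [abs_sub_comm]
      exact hsepS' k hk k' hk' this
    have hTmem : ∀ x ∈ T, m ω ≤ x ∧ x ≤ M ω := by
      intro x hx
      rw [hT, Finset.mem_image] at hx
      obtain ⟨k, hk, rfl⟩ := hx
      have hk0 : k ≠ 0 := Finset.ne_of_mem_erase hk
      have hkS : k ∈ S := Finset.mem_of_mem_erase hk
      rw [hS, Finset.mem_filter, Finset.mem_range] at hkS
      have : k ∈ Finset.Icc 1 n := by rw [Finset.mem_Icc]; omega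
      exact hle k this
    have hTcard : (T.card : ℝ) ≤ M ω - m ω + 1 :=
      sep_card_le_aux T.card T le_rfl hTsep (m ω) (M ω) hmM hTmem
    have hScard : S.card ≤ S'.card + 1 := by
      rw [hS']
      by_cases h0 : 0 ∈ S
      · rw [Finset.card_erase_of_mem h0]; omega
      · rw [Finset.erase_eq_of_notMem h0]; omega
    calc (S.card : ℝ) ≤ (S'.card : ℝ) + 1 := by exact_mod_cast hScard
      _ = (T.card : ℝ) + 1 := by rw [hcardT]
      _ ≤ M ω - m ω + 2 := by linarith
  -- integrate
  have hintk : ∀ k ∈ Finset.range n, Integrable ((A k).indicator (fun _ => (1:ℝ))) μ :=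
    fun k _ => (integrable_const (1:ℝ)).indicator (hmeasA k)
  have hintf : Integrable (fun ω => ∑ k ∈ Finset.range n, (A k).indicator (fun _ => (1:ℝ)) ω) μ :=
    integrable_finset_sum _ hintk
  have hintMm : Integrable (fun ω => M ω - m ω) μ := (hintmax n).sub (hintmin n)
  have hintg : Integrable (fun ω => M ω - m ω + 2) μ := hintMm.add (integrable_const 2)
  have hle := integral_mono hintf hintg hpoint
  rw [integral_finset_sum _ hintk] at hle
  have hlhs : ∑ k ∈ Finset.range n, ∫ ω, (A k).indicator (fun _ => (1:ℝ)) ω ∂μ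
      = (n : ℝ) * (μ E).toReal := by
    have : ∀ k ∈ Finset.range n,
        ∫ ω, (A k).indicator (fun _ => (1:ℝ)) ω ∂μ = (μ E).toReal := by
      intro k _
      rw [integral_indicator_const (1:ℝ) (hmeasA k), measureReal_def, hμA k, smul_eq_mul, mul_one]
    rw [Finset.sum_congr rfl this, Finset.sum_const, Finset.card_range, nsmul_eq_mul]
  have hrhs : ∫ ω, (M ω - m ω + 2) ∂μ = (∫ ω, (M ω - m ω) ∂μ) + 2 := by
    rw [integral_add hintMm (integrable_const 2), integral_const]
    simp
  rw [hlhs, hrhs] at hle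
  exact hle
end
end

section
/- Let $(Z_n)_{n\ge 0}$ be a centered process with stationary increments, $Z_0=0$, and $\mathbb{E}[Z_n]=0$ for all $n$. Then for every $n\ge 1$, $n\,\mathbb{P}(\max_{1\le \ell\le n} Z_\ell \le -1) \le \mathbb{E}[\max_{0\le k\le n} Z_k]$. -/
open MeasureTheory Filter Finset

noncomputable section

lemma iSup_subtype_eq_sup' (s : Finset ℕ) (hs : s.Nonempty) (f : ℕ → ℝ) :
    (⨆ k : s, f k.1) = s.sup' hs f := by
  rw [Finset.sup'_eq_csSup_image, iSup]
  congr 1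
  ext x
  constructor
  · rintro ⟨⟨k, hk⟩, rfl⟩; exact ⟨k, hk, rfl⟩
  · rintro ⟨k, hk, rfl⟩; exact ⟨⟨k, hk⟩, rfl⟩

lemma integrable_sup' {Ω : Type*} [MeasurableSpace Ω] (μ : Measure Ω)
    (Z : ℕ → Ω → ℝ) (hint : ∀ n, Integrable (Z n) μ) (s : Finset ℕ) (hs : s.Nonempty) :
    Integrable (fun ω => s.sup' hs (fun j => Z j ω)) μ := by
  induction hs using Finset.Nonempty.cons_induction with
  | singleton a => simpa using hint a
  | cons a t ha ht ih =>
      have heq : (fun ω => (Finset.cons a t ha).sup' (Finset.cons_nonempty ha) (fun j => Z j ω))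
          = fun ω => (Z a ω) ⊔ (t.sup' ht (fun j => Z j ω)) := by
        funext ω; rw [Finset.sup'_cons]
      rw [heq]
      exact (hint a).sup ih

theorem stmt1 {Ω : Type*} [MeasurableSpace Ω] (μ : Measure Ω) [IsProbabilityMeasure μ]
    (Z : ℕ → Ω → ℝ) (hmeas : ∀ n, Measurable (Z n)) (hZ0 : ∀ ω, Z 0 ω = 0)
    (hstat : HasStationaryIncrements μ Z)
    (hint : ∀ n, Integrable (Z n) μ)
    (hcent : ∀ n, ∫ ω, Z n ω ∂μ = 0)
    (hintmax : ∀ n, Integrable (fun ω => ⨆ k : Finset.Icc 0 n, Z k.1 ω) μ)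
    (n : ℕ) (hn : 1 ≤ n) :
    (n : ℝ) * (μ {ω | ∀ ℓ ∈ Finset.Icc 1 n, Z ℓ ω ≤ -1}).toReal
      ≤ ∫ ω, ⨆ k : Finset.Icc 0 n, Z k.1 ω ∂μ := by
  classical
  -- running maxima from the right
  set M : ℕ → Ω → ℝ := fun k ω =>
    (Finset.Icc (min k n) n).sup' (Finset.nonempty_Icc.2 (min_le_right _ _)) (fun j => Z j ω)
    with hM
  have hMeq : ∀ k (hk : k ≤ n), ∀ ω, M k ω =
      (Finset.Icc k n).sup' (Finset.nonempty_Icc.2 hk) (fun j => Z j ω) := by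
    intro k hk ω
    simp only [hM, min_eq_left hk]
  have hMint : ∀ k, Integrable (M k) μ :=
    fun k => integrable_sup' μ Z hint _ _
  -- M n = Z n
  have hMn : ∀ ω, M n ω = Z n ω := by
    intro ω
    rw [hMeq n le_rfl ω]
    simp
  -- recursion: for i < n, M i = max (Z i) (M (i+1))
  have hMrec : ∀ i, i < n → ∀ ω, M i ω = max (Z i ω) (M (i + 1) ω) := by
    intro i hi ω
    rw [hMeq i (by omega) ω, hMeq (i + 1) (by omega) ω]
    apply le_antisymm
    · apply Finset.sup'_le
      intro j hj
      simp only [Finset.mem_Icc] at hj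
      rcases eq_or_lt_of_le hj.1 with rfl | h
      · exact le_max_left _ _
      · exact le_trans (Finset.le_sup' (f := fun j => Z j ω)
          (by simp only [Finset.mem_Icc]; omega)) (le_max_right _ _)
    · apply max_le
      · exact Finset.le_sup' (f := fun j => Z j ω) (by simp only [Finset.mem_Icc]; omega)
      · apply Finset.sup'_le
        intro j hj
        simp only [Finset.mem_Icc] at hj
        exact Finset.le_sup' (f := fun j => Z j ω) (by simp only [Finset.mem_Icc]; omega)
  -- the events H i
  set H : ℕ → Set Ω := fun i => {ω | ∀ j ∈ Finset.Icc (i + 1) n, Z j ω - Z i ω ≤ -1} with hH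
  have hHmeas : ∀ i, MeasurableSet (H i) := by
    intro i
    have : H i = ⋂ j ∈ (Finset.Icc (i + 1) n : Set ℕ), {ω | Z j ω - Z i ω ≤ -1} := by
      ext ω; simp [hH]
    rw [this]
    exact MeasurableSet.biInter (Set.to_countable _)
      (fun j _ => measurableSet_le (by fun_prop) measurable_const)
  -- key per-step inequality: μ(H i) ≤ ∫ (M i - M (i+1))
  have hstep : ∀ i, i < n →
      (μ (H i)).toReal ≤ ∫ ω, (M i ω - M (i + 1) ω) ∂μ := by
    intro i hi
    have hind : ∀ ω, (H i).indicator (fun _ => (1 : ℝ)) ω ≤ M i ω - M (i + 1) ω := by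
      intro ω
      by_cases hω : ω ∈ H i
      · rw [Set.indicator_of_mem hω]
        have hle : M (i + 1) ω ≤ Z i ω - 1 := by
          rw [hMeq (i + 1) (by omega) ω]
          apply Finset.sup'_le
          intro j hj
          have := hω j hj
          linarith
        rw [hMrec i hi ω]
        have : Z i ω ≤ max (Z i ω) (M (i + 1) ω) := le_max_left _ _
        linarith
      · rw [Set.indicator_of_notMem hω]
        rw [hMrec i hi ω]
        have : M (i + 1) ω ≤ max (Z i ω) (M (i + 1) ω) := le_max_right _ _
        linarith
    calc (μ (H i)).toReal
        = ∫ ω, (H i).indicator (fun _ => (1 : ℝ)) ω ∂μ := by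
          rw [integral_indicator_const _ (hHmeas i)]; simp; rfl
      _ ≤ ∫ ω, (M i ω - M (i + 1) ω) ∂μ := by
          apply integral_mono _ ((hMint i).sub (hMint (i + 1))) hind
          exact (integrable_const (1 : ℝ)).indicator (hHmeas i)
  -- stationarity: μ (H i) = μ {ω | ∀ ℓ ∈ Icc 1 (n - i), Z ℓ ω ≤ -1}
  have hstatH : ∀ i, i < n →
      μ (H i) = μ {ω | ∀ ℓ ∈ Finset.Icc 1 (n - i), Z ℓ ω ≤ -1} := by
    intro i hi
    set S : Set (ℕ → ℝ) := {f | ∀ ℓ ∈ Finset.Icc 1 (n - i), f ℓ ≤ -1} with hS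
    have hSmeas : MeasurableSet S := by
      have : S = ⋂ ℓ ∈ (Finset.Icc 1 (n - i) : Set ℕ), {f : ℕ → ℝ | f ℓ ≤ -1} := by
        ext f; simp [hS]
      rw [this]
      exact MeasurableSet.biInter (Set.to_countable _)
        (fun ℓ _ => measurableSet_le (measurable_pi_apply ℓ) measurable_const)
    have hmap1 : Measurable (fun ω => fun m => Z (m + i) ω - Z i ω) :=
      measurable_pi_lambda _ (fun m => (hmeas _).sub (hmeas _))
    have hmap2 : Measurable (fun ω => fun m => Z m ω) :=
      measurable_pi_lambda _ (fun m => hmeas m)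
    have h1 : μ (H i) = Measure.map (fun ω => fun m => Z (m + i) ω - Z i ω) μ S := by
      rw [Measure.map_apply hmap1 hSmeas]
      congr 1
      ext ω
      simp only [hH, hS, Set.mem_setOf_eq, Set.mem_preimage]
      constructor
      · intro h ℓ hℓ
        simp only [Finset.mem_Icc] at hℓ
        exact h (ℓ + i) (by simp [Finset.mem_Icc]; omega)
      · intro h j hj
        simp only [Finset.mem_Icc] at hj
        have := h (j - i) (by simp [Finset.mem_Icc]; omega)
        have hji : j - i + i = j := by omega
        rwa [hji] at this
    rw [h1, hstat i, Measure.map_apply hmap2 hSmeas]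
    congr 1
  -- monotonicity: A ⊆ the (n-i) event
  have hmono : ∀ i, i < n →
      (μ {ω | ∀ ℓ ∈ Finset.Icc 1 n, Z ℓ ω ≤ -1}).toReal ≤ (μ (H i)).toReal := by
    intro i hi
    rw [hstatH i hi]
    apply ENNReal.toReal_mono (measure_ne_top μ _)
    apply measure_mono
    intro ω hω ℓ hℓ
    simp only [Finset.mem_Icc] at hℓ
    exact hω ℓ (by simp [Finset.mem_Icc]; omega)
  -- sum the steps
  have hMn0 : ∫ ω, M n ω ∂μ = 0 := by
    calc ∫ ω, M n ω ∂μ = ∫ ω, Z n ω ∂μ :=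
          integral_congr_ae (Filter.Eventually.of_forall hMn)
      _ = 0 := hcent n
  have hsum : ∫ ω, M 0 ω ∂μ = ∑ i ∈ Finset.range n, ∫ ω, (M i ω - M (i + 1) ω) ∂μ := by
    have hfs := integral_finset_sum (μ := μ) (Finset.range n)
      (f := fun i ω => M i ω - M (i + 1) ω) (fun i _ => (hMint i).sub (hMint (i + 1)))
    calc ∫ ω, M 0 ω ∂μ = ∫ ω, (M 0 ω - M n ω) ∂μ := by
          rw [integral_sub (hMint 0) (hMint n), hMn0, sub_zero]
      _ = ∫ ω, ∑ i ∈ Finset.range n, (M i ω - M (i + 1) ω) ∂μ := by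
          apply integral_congr_ae
          apply Filter.Eventually.of_forall
          intro ω
          exact (Finset.sum_range_sub' (fun i => M i ω) n).symm
      _ = ∑ i ∈ Finset.range n, ∫ ω, (M i ω - M (i + 1) ω) ∂μ := hfs
  -- RHS integrand equals M 0
  have hRHS : ∫ ω, (⨆ k : Finset.Icc 0 n, Z k.1 ω) ∂μ = ∫ ω, M 0 ω ∂μ := by
    apply integral_congr_ae
    apply Filter.Eventually.of_forall
    intro ω
    have h := iSup_subtype_eq_sup' (Finset.Icc 0 n) (Finset.nonempty_Icc.2 (by omega))
      (fun j => Z j ω)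
    simp only [hMeq 0 (by omega) ω]
    exact h
  rw [hRHS, hsum]
  calc (n : ℝ) * (μ {ω | ∀ ℓ ∈ Finset.Icc 1 n, Z ℓ ω ≤ -1}).toReal
      = ∑ i ∈ Finset.range n, (μ {ω | ∀ ℓ ∈ Finset.Icc 1 n, Z ℓ ω ≤ -1}).toReal := by
        rw [Finset.sum_const, Finset.card_range, nsmul_eq_mul]
    _ ≤ ∑ i ∈ Finset.range n, ∫ ω, (M i ω - M (i + 1) ω) ∂μ := by
        apply Finset.sum_le_sum
        intro i hi
        have hi' : i < n := Finset.mem_range.mp hi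
        exact le_trans (hmono i hi') (hstep i hi')
end
end

section
/- Let $(Z_n)_{n\ge 0}$ be an integer-valued process with stationary increments and $Z_0=0$. Let $T_0:=\inf\{n\ge 1: Z_n=0\}$, $\mathcal{R}_n:=\#\{Z_0,\dots,Z_n\}$. Suppose $(a_n)$ is a regularly varying sequence with exponent $\gamma\in(0,1)$ and $\mathbb{E}[\mathcal{R}_n]/a_n \to C$ as $n\to\infty$ for some $C\in(0,\infty)$. Then $\lim_{n\to\infty} \frac{n}{a_n}\mathbb{P}(T_0 > n) = \gamma C$. -/
open MeasureTheory Filter Finset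

noncomputable section

/-- A sequence of positive reals is regularly varying with exponent `γ` if
`a ⌊λ n⌋ / a n → λ ^ γ` for every `λ > 0`. -/
def RegularlyVarying (a : ℕ → ℝ) (γ : ℝ) : Prop :=
  ∀ lam : ℝ, 0 < lam →
    Tendsto (fun n : ℕ => a ⌊lam * n⌋₊ / a n) atTop (nhds (lam ^ γ))

lemma card_image_eq_filter {α : Type*} [DecidableEq α] (s : Finset ℕ) (f : ℕ → α) :
    (s.image f).card
      = (s.filter fun k => ∀ j ∈ s, k < j → f j ≠ f k).card := by
  classical
  refine (Finset.card_bij (fun k _ => f k) ?_ ?_ ?_).symm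
  · intro k hk
    exact Finset.mem_image_of_mem f (Finset.mem_filter.1 hk).1
  · intro k₁ hk₁ k₂ hk₂ h
    by_contra hne
    rcases Nat.lt_or_ge k₁ k₂ with hlt | hge
    · exact (Finset.mem_filter.1 hk₁).2 k₂ (Finset.mem_filter.1 hk₂).1 hlt h.symm
    · have hlt : k₂ < k₁ := lt_of_le_of_ne hge (Ne.symm hne)
      exact (Finset.mem_filter.1 hk₂).2 k₁ (Finset.mem_filter.1 hk₁).1 hlt h
  · intro b hb
    obtain ⟨m, hm, rfl⟩ := Finset.mem_image.1 hb
    set t := s.filter (fun j => f j = f m) with ht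
    have htne : t.Nonempty := ⟨m, Finset.mem_filter.2 ⟨hm, rfl⟩⟩
    have hk : t.max' htne ∈ t := t.max'_mem htne
    refine ⟨t.max' htne, ?_, (Finset.mem_filter.1 hk).2⟩
    refine Finset.mem_filter.2 ⟨(Finset.mem_filter.1 hk).1, ?_⟩
    intro j hj hlt heq
    have hjt : j ∈ t := Finset.mem_filter.2 ⟨hj, heq.trans (Finset.mem_filter.1 hk).2⟩
    exact absurd (t.le_max' j hjt) (not_le.2 hlt)

lemma expected_range {Ω : Type*} [MeasurableSpace Ω] (μ : Measure Ω) [IsProbabilityMeasure μ]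
    (Z : ℕ → Ω → ℝ) (hmeas : ∀ n, Measurable (Z n))
    (hstat : ∀ k : ℕ, Measure.map (fun ω => fun n => Z (n + k) ω - Z k ω) μ
      = Measure.map (fun ω => fun n => Z n ω) μ) (n : ℕ) :
    (∫ ω, (((Finset.Icc 0 n).image (fun k => Z k ω)).card : ℝ) ∂μ)
      = ∑ m ∈ Finset.range (n+1),
          (μ {ω | ∀ j ∈ Finset.Icc 1 m, Z j ω ≠ 0}).toReal := by
  classical
  set A : ℕ → Set Ω := fun k => {ω | ∀ j ∈ Finset.Icc (k+1) n, Z j ω ≠ Z k ω} with hA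
  have hAmeas : ∀ k, MeasurableSet (A k) := by
    intro k
    have : A k = ⋂ j ∈ Finset.Icc (k+1) n, {ω | Z j ω ≠ Z k ω} := by
      ext ω; simp [hA]
    rw [this]
    exact MeasurableSet.biInter (Set.to_countable _)
      (fun j _ => (measurableSet_eq_fun (hmeas j) (hmeas k)).compl)
  -- pointwise identity
  have hpt : ∀ ω, (((Finset.Icc 0 n).image (fun k => Z k ω)).card : ℝ)
      = ∑ k ∈ Finset.Icc 0 n, (A k).indicator (fun _ => (1:ℝ)) ω := by
    intro ω
    rw [card_image_eq_filter (Finset.Icc 0 n) (fun k => Z k ω), Finset.card_filter]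
    push_cast
    refine Finset.sum_congr rfl (fun k hk => ?_)
    rw [Set.indicator_apply]
    congr 1
    simp only [hA, Set.mem_setOf_eq, Finset.mem_Icc, eq_iff_iff]
    constructor
    · intro h j hj; exact h j ⟨by omega, hj.2⟩ (by omega)
    · intro h j hj hlt; exact h j ⟨by omega, hj.2⟩
  rw [integral_congr_ae (Filter.EventuallyEq.of_eq (funext hpt)),
    integral_finset_sum _ (fun k _ => (integrable_const (1:ℝ)).indicator (hAmeas k))]
  -- each integral is a measure
  have hint : ∀ k, ∫ ω, (A k).indicator (fun _ => (1:ℝ)) ω ∂μ = (μ (A k)).toReal := by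
    intro k
    rw [MeasureTheory.integral_indicator_const (1:ℝ) (hAmeas k), smul_eq_mul, mul_one]
    rfl
  -- stationarity: μ (A k) = μ (B (n - k)) for k ≤ n
  have hstatA : ∀ k, k ≤ n → μ (A k) = μ {ω | ∀ j ∈ Finset.Icc 1 (n - k), Z j ω ≠ 0} := by
    intro k hkn
    set S : Set (ℕ → ℝ) := {f | ∀ i ∈ Finset.Icc 1 (n - k), f i ≠ 0} with hSdef
    have hSmeas : MeasurableSet S := by
      have : S = ⋂ i ∈ Finset.Icc 1 (n - k), {f : ℕ → ℝ | f i ≠ 0} := by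
        ext f; simp [hSdef]
      rw [this]
      exact MeasurableSet.biInter (Set.to_countable _)
        (fun i _ => ((measurable_pi_apply i) (measurableSet_singleton 0)).compl)
    have hF : Measurable (fun ω => fun m => Z (m + k) ω - Z k ω) :=
      measurable_pi_lambda _ (fun m => (hmeas (m + k)).sub (hmeas k))
    have hG : Measurable (fun ω => fun m : ℕ => Z m ω) :=
      measurable_pi_lambda _ (fun m => hmeas m)
    have hpre : A k = (fun ω => fun m => Z (m + k) ω - Z k ω) ⁻¹' S := by
      ext ω
      simp only [hA, Set.mem_setOf_eq, Set.mem_preimage, hSdef, Finset.mem_Icc]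
      constructor
      · intro h i hi
        exact sub_ne_zero_of_ne (h (i + k) ⟨by omega, by omega⟩)
      · intro h j hj
        have h2 := h (j - k) ⟨by omega, by omega⟩
        rw [show j - k + k = j by omega] at h2
        exact sub_ne_zero.1 h2
    have hpre2 : {ω | ∀ j ∈ Finset.Icc 1 (n - k), Z j ω ≠ 0}
        = (fun ω => fun m : ℕ => Z m ω) ⁻¹' S := by
      ext ω; simp [hSdef]
    rw [hpre, hpre2, ← Measure.map_apply hF hSmeas, ← Measure.map_apply hG hSmeas, hstat k]
  -- assemble
  calc ∑ k ∈ Finset.Icc 0 n, ∫ ω, (A k).indicator (fun _ => (1:ℝ)) ω ∂μ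
      = ∑ k ∈ Finset.Icc 0 n, (μ {ω | ∀ j ∈ Finset.Icc 1 (n - k), Z j ω ≠ 0}).toReal := by
        refine Finset.sum_congr rfl (fun k hk => ?_)
        rw [hint k, hstatA k (Finset.mem_Icc.1 hk).2]
    _ = ∑ k ∈ Finset.range (n+1), (μ {ω | ∀ j ∈ Finset.Icc 1 (n - k), Z j ω ≠ 0}).toReal := by
        rw [show Finset.Icc 0 n = Finset.range (n+1) by
          rw [← Finset.Ico_add_one_right_eq_Icc, Nat.Ico_zero_eq_range]]
    _ = ∑ m ∈ Finset.range (n+1), (μ {ω | ∀ j ∈ Finset.Icc 1 m, Z j ω ≠ 0}).toReal := by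
        rw [← Finset.sum_range_reflect
          (fun m => (μ {ω | ∀ j ∈ Finset.Icc 1 m, Z j ω ≠ 0}).toReal) (n+1)]
        refine Finset.sum_congr rfl (fun k hk => ?_)
        have h9 : n + 1 - 1 - k = n - k := by omega
        rw [h9]

lemma tauberian (p : ℕ → ℝ) (hmono : ∀ {m n : ℕ}, m ≤ n → p n ≤ p m)
    (a : ℕ → ℝ) (hapos : ∀ n, 0 < a n) (γ : ℝ) (hγ : γ ∈ Set.Ioo (0:ℝ) 1)
    (hreg : RegularlyVarying a γ) (C : ℝ) (hC : 0 < C)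
    (hS : Tendsto (fun n => (∑ m ∈ Finset.range (n+1), p m) / a n) atTop (nhds C)) :
    Tendsto (fun n : ℕ => (n:ℝ) / a n * p n) atTop (nhds (γ * C)) := by
  -- slope limit
  have hslope : Tendsto (fun x : ℝ => C * ((x ^ γ - 1) / (x - 1))) (nhdsWithin 1 {(1:ℝ)}ᶜ)
      (nhds (γ * C)) := by
    have hd : HasDerivAt (fun x : ℝ => x ^ γ) γ 1 := by
      have := Real.hasDerivAt_rpow_const (x := 1) (p := γ) (Or.inl one_ne_zero)
      simpa using this
    have h1 := (hasDerivAt_iff_tendsto_slope.1 hd).const_mul C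
    rw [mul_comm γ C]
    refine h1.congr (fun x => ?_)
    rw [slope_def_field, Real.one_rpow]
  rw [tendsto_order]
  constructor
  · -- lower bound branch
    intro b hb
    have hev : ∀ᶠ x in nhdsWithin 1 {(1:ℝ)}ᶜ, b < C * ((x ^ γ - 1) / (x - 1)) :=
      hslope.eventually (eventually_gt_nhds hb)
    have hmono' : nhdsWithin (1:ℝ) (Set.Ioi 1) ≤ nhdsWithin 1 {(1:ℝ)}ᶜ :=
      nhdsWithin_mono 1 (fun x hx => ne_of_gt hx)
    obtain ⟨x, hbx, hx1⟩ := ((hev.filter_mono hmono').and self_mem_nhdsWithin).exists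
    have hx0 : (0:ℝ) < x := lt_trans zero_lt_one hx1
    -- floor asymptotics
    have hfloor : Tendsto (fun n : ℕ => (⌊x * n⌋₊ : ℝ) / n) atTop (nhds x) :=
      (tendsto_nat_floor_mul_div_atTop hx0.le).comp tendsto_natCast_atTop_atTop
    have hfT : Tendsto (fun n : ℕ => ⌊x * (n:ℝ)⌋₊) atTop atTop :=
      tendsto_nat_floor_atTop.comp
        (Tendsto.const_mul_atTop hx0 tendsto_natCast_atTop_atTop)
    have hDa : Tendsto (fun n : ℕ =>
        (∑ m ∈ Finset.range (⌊x * (n:ℝ)⌋₊ + 1), p m) / a n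
          - (∑ m ∈ Finset.range (n+1), p m) / a n)
        atTop (nhds (C * x ^ γ - C)) := by
      refine Tendsto.sub ?_ hS
      have h2 := (hS.comp hfT).mul (hreg x hx0)
      refine h2.congr (fun n => ?_)
      have := (hapos ⌊x * (n:ℝ)⌋₊).ne'
      rw [Function.comp_apply]
      field_simp
    have hcn : Tendsto (fun n : ℕ => (n:ℝ) / ((⌊x * (n:ℝ)⌋₊ : ℝ) - n)) atTop
        (nhds (x - 1)⁻¹) := by
      have h3 : Tendsto (fun n : ℕ => (⌊x * (n:ℝ)⌋₊ : ℝ) / n - 1) atTop (nhds (x - 1)) :=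
        hfloor.sub tendsto_const_nhds
      have h4 := h3.inv₀ (sub_ne_zero.2 (ne_of_gt hx1))
      refine (h4.congr' ?_)
      filter_upwards [eventually_ge_atTop 1] with n hn
      have hn0 : ((n:ℝ)) ≠ 0 := Nat.cast_ne_zero.2 (by omega)
      rw [show (⌊x * (n:ℝ)⌋₊ : ℝ) / n - 1 = ((⌊x * (n:ℝ)⌋₊ : ℝ) - n) / n by field_simp,
        inv_div]
    have hg := hDa.mul hcn
    have hL : (C * x ^ γ - C) * (x - 1)⁻¹ = C * ((x ^ γ - 1) / (x - 1)) := by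
      rw [div_eq_mul_inv]; ring
    rw [hL] at hg
    filter_upwards [hg.eventually (eventually_gt_nhds hbx),
      hfloor.eventually (eventually_gt_nhds hx1), eventually_ge_atTop 1] with n hgn hfn hn1
    set M := ⌊x * (n:ℝ)⌋₊ with hM
    have hnpos : (0:ℝ) < n := by exact_mod_cast Nat.pos_of_ne_zero (by omega)
    have hnM : (n:ℝ) < M := by
      have := (one_lt_div hnpos).1 hfn; exact_mod_cast this
    have hnMn : n < M := by exact_mod_cast hnM
    have hcpos : (0:ℝ) < (M:ℝ) - n := by linarith
    -- sum difference bound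
    have hsum : (∑ m ∈ Finset.range (M+1), p m) - (∑ m ∈ Finset.range (n+1), p m)
        = ∑ m ∈ Finset.Ico (n+1) (M+1), p m := by
      rw [← Finset.sum_range_add_sum_Ico p (Nat.succ_le_succ hnMn.le)]; ring
    have hDle : (∑ m ∈ Finset.Ico (n+1) (M+1), p m) ≤ ((M:ℝ) - n) * p n := by
      have := Finset.sum_le_card_nsmul (Finset.Ico (n+1) (M+1)) p (p n)
        (fun i hi => hmono (by have := (Finset.mem_Ico.1 hi).1; omega))
      rw [Nat.card_Ico, nsmul_eq_mul] at this
      have hcast : ((M + 1 - (n + 1) : ℕ) : ℝ) = (M:ℝ) - n := by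
        have : n + 1 ≤ M + 1 := by omega
        rw [Nat.cast_sub this]; push_cast; ring
      calc (∑ m ∈ Finset.Ico (n+1) (M+1), p m) ≤ ((M + 1 - (n + 1) : ℕ) : ℝ) * p n := this
        _ = ((M:ℝ) - n) * p n := by rw [hcast]
    refine lt_of_lt_of_le hgn ?_
    have hstep : ((∑ m ∈ Finset.range (M+1), p m) / a n
          - (∑ m ∈ Finset.range (n+1), p m) / a n) * ((n:ℝ) / ((M:ℝ) - n))
        ≤ (((M:ℝ) - n) * p n / a n) * ((n:ℝ) / ((M:ℝ) - n)) := by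
      rw [← sub_div, hsum]
      gcongr <;> first
        | exact hDle
        | exact hDge
        | exact (hapos _).le
        | exact div_nonneg hnpos.le hcpos.le
    refine hstep.trans (le_of_eq ?_)
    have hane := (hapos n).ne'
    field_simp
  · -- upper bound branch
    intro b hb
    have hev : ∀ᶠ x in nhdsWithin 1 {(1:ℝ)}ᶜ, C * ((x ^ γ - 1) / (x - 1)) < b :=
      hslope.eventually (eventually_lt_nhds hb)
    have hmono' : nhdsWithin (1:ℝ) (Set.Iio 1) ≤ nhdsWithin 1 {(1:ℝ)}ᶜ :=
      nhdsWithin_mono 1 (fun x hx => ne_of_lt hx)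
    have hpos : ∀ᶠ x in nhdsWithin (1:ℝ) (Set.Iio 1), (0:ℝ) < x :=
      eventually_nhdsWithin_of_eventually_nhds (eventually_gt_nhds zero_lt_one)
    obtain ⟨x, ⟨hbx, hx0⟩, hx1⟩ :=
      (((hev.filter_mono hmono').and hpos).and self_mem_nhdsWithin).exists
    have hfloor : Tendsto (fun n : ℕ => (⌊x * n⌋₊ : ℝ) / n) atTop (nhds x) :=
      (tendsto_nat_floor_mul_div_atTop hx0.le).comp tendsto_natCast_atTop_atTop
    have hfT : Tendsto (fun n : ℕ => ⌊x * (n:ℝ)⌋₊) atTop atTop :=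
      tendsto_nat_floor_atTop.comp
        (Tendsto.const_mul_atTop hx0 tendsto_natCast_atTop_atTop)
    have hEa : Tendsto (fun n : ℕ =>
        (∑ m ∈ Finset.range (n+1), p m) / a n
          - (∑ m ∈ Finset.range (⌊x * (n:ℝ)⌋₊ + 1), p m) / a n)
        atTop (nhds (C - C * x ^ γ)) := by
      refine Tendsto.sub hS ?_
      have h2 := (hS.comp hfT).mul (hreg x hx0)
      refine h2.congr (fun n => ?_)
      have := (hapos ⌊x * (n:ℝ)⌋₊).ne'
      rw [Function.comp_apply]
      field_simp
    have hcn : Tendsto (fun n : ℕ => (n:ℝ) / ((n:ℝ) - (⌊x * (n:ℝ)⌋₊ : ℝ))) atTop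
        (nhds (1 - x)⁻¹) := by
      have h3 : Tendsto (fun n : ℕ => 1 - (⌊x * (n:ℝ)⌋₊ : ℝ) / n) atTop (nhds (1 - x)) :=
        tendsto_const_nhds.sub hfloor
      have h4 := h3.inv₀ (sub_ne_zero.2 (ne_of_gt (by linarith)))
      refine (h4.congr' ?_)
      filter_upwards [eventually_ge_atTop 1] with n hn
      have hn0 : ((n:ℝ)) ≠ 0 := Nat.cast_ne_zero.2 (by omega)
      rw [show 1 - (⌊x * (n:ℝ)⌋₊ : ℝ) / n = ((n:ℝ) - ⌊x * (n:ℝ)⌋₊) / n by field_simp,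
        inv_div]
    have hg := hEa.mul hcn
    have hL : (C - C * x ^ γ) * (1 - x)⁻¹ = C * ((x ^ γ - 1) / (x - 1)) := by
      have h1 : (1:ℝ) - x ≠ 0 := sub_ne_zero.2 (by linarith)
      have h2 : x - 1 ≠ 0 := sub_ne_zero.2 (ne_of_lt hx1)
      field_simp
      ring
    rw [hL] at hg
    filter_upwards [hg.eventually (eventually_lt_nhds hbx),
      hfloor.eventually (eventually_lt_nhds hx1), eventually_ge_atTop 1] with n hgn hfn hn1
    set M := ⌊x * (n:ℝ)⌋₊ with hM
    have hnpos : (0:ℝ) < n := by exact_mod_cast Nat.pos_of_ne_zero (by omega)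
    have hMn : (M:ℝ) < n := by
      have := (div_lt_one hnpos).1 hfn; exact_mod_cast this
    have hMnn : M < n := by exact_mod_cast hMn
    have hcpos : (0:ℝ) < (n:ℝ) - M := by linarith
    have hsum : (∑ m ∈ Finset.range (n+1), p m) - (∑ m ∈ Finset.range (M+1), p m)
        = ∑ m ∈ Finset.Ico (M+1) (n+1), p m := by
      rw [← Finset.sum_range_add_sum_Ico p (Nat.succ_le_succ hMnn.le)]; ring
    have hDge : ((n:ℝ) - M) * p n ≤ ∑ m ∈ Finset.Ico (M+1) (n+1), p m := by
      have := Finset.card_nsmul_le_sum (Finset.Ico (M+1) (n+1)) p (p n)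
        (fun i hi => hmono (by have := (Finset.mem_Ico.1 hi).2; omega))
      rw [Nat.card_Ico, nsmul_eq_mul] at this
      have hcast : ((n + 1 - (M + 1) : ℕ) : ℝ) = (n:ℝ) - M := by
        have : M + 1 ≤ n + 1 := by omega
        rw [Nat.cast_sub this]; push_cast; ring
      calc ((n:ℝ) - M) * p n = ((n + 1 - (M + 1) : ℕ) : ℝ) * p n := by rw [hcast]
        _ ≤ _ := this
    refine lt_of_le_of_lt ?_ hgn
    have hstep : (((n:ℝ) - M) * p n / a n) * ((n:ℝ) / ((n:ℝ) - M))
        ≤ ((∑ m ∈ Finset.range (n+1), p m) / a n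
            - (∑ m ∈ Finset.range (M+1), p m) / a n) * ((n:ℝ) / ((n:ℝ) - M)) := by
      rw [← sub_div, hsum]
      gcongr <;> first
        | exact hDle
        | exact hDge
        | exact (hapos _).le
        | exact div_nonneg hnpos.le hcpos.le
    refine le_trans (le_of_eq ?_) hstep
    have hane := (hapos n).ne'
    field_simp

theorem stmt3 {Ω : Type*} [MeasurableSpace Ω] (μ : Measure Ω) [IsProbabilityMeasure μ]
    (Z : ℕ → Ω → ℝ) (hmeas : ∀ n, Measurable (Z n)) (hZ0 : ∀ ω, Z 0 ω = 0)
    (hZint : ∀ n ω, ∃ m : ℤ, Z n ω = m)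
    (hstat : HasStationaryIncrements μ Z)
    (a : ℕ → ℝ) (hapos : ∀ n, 0 < a n)
    (γ : ℝ) (hγ : γ ∈ Set.Ioo (0:ℝ) 1) (hreg : RegularlyVarying a γ)
    (C : ℝ) (hC : 0 < C)
    (hconv : Tendsto
      (fun n : ℕ => (∫ ω, (((Finset.Icc 0 n).image (fun k => Z k ω)).card : ℝ) ∂μ) / a n)
      atTop (nhds C)) :
    Tendsto (fun n : ℕ =>
        (n : ℝ) / a n * (μ {ω | ∀ j ∈ Finset.Icc 1 n, Z j ω ≠ 0}).toReal)
      atTop (nhds (γ * C)) := by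
  set p : ℕ → ℝ := fun m => (μ {ω | ∀ j ∈ Finset.Icc 1 m, Z j ω ≠ 0}).toReal with hp
  have hmono : ∀ {m n : ℕ}, m ≤ n → p n ≤ p m := by
    intro m n hmn
    refine ENNReal.toReal_mono (measure_ne_top μ _) (measure_mono ?_)
    intro ω hω j hj
    exact hω j (Finset.mem_Icc.2 ⟨(Finset.mem_Icc.1 hj).1, le_trans (Finset.mem_Icc.1 hj).2 hmn⟩)
  have hS : Tendsto (fun n => (∑ m ∈ Finset.range (n+1), p m) / a n) atTop (nhds C) := by
    refine hconv.congr (fun n => ?_)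
    rw [expected_range μ Z hmeas hstat n]
  exact tauberian p hmono a hapos γ hγ hreg C hC hS
end
end

section
/- Let $(Z_n)_{n\ge 0}$ be an integer-valued process with stationary increments, $Z_0=0$, and suppose $(a_n)$ is regularly varying with exponent $\gamma\in(0,1)$ with $0 < \liminf_n \mathbb{E}[\mathcal{R}_n]/a_n \le \limsup_n \mathbb{E}[\mathcal{R}_n]/a_n < \infty$, where $\mathcal{R}_n = \#\{Z_0,\dots,Z_n\}$. Then $0 < \liminf_n \frac{n}{a_n}\mathbb{P}(T_0>n) \le \limsup_n \frac{n}{a_n}\mathbb{P}(T_0>n) < \infty$, where $T_0=\inf\{n\ge1: Z_n=0\}$. -/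
open MeasureTheory Filter Finset

noncomputable section

lemma card_image_last {α : Type*} [DecidableEq α] (f : ℕ → α) (n : ℕ) :
    ((Finset.range (n+1)).image f).card
      = ((Finset.range (n+1)).filter (fun k => ∀ j ∈ Finset.Ioc k n, f j ≠ f k)).card := by
  classical
  symm
  apply Finset.card_bij (fun k _ => f k)
  · intro a ha
    exact Finset.mem_image_of_mem f (Finset.mem_of_mem_filter a ha)
  · intro a ha b hb hfab
    simp only [Finset.mem_filter, Finset.mem_range] at ha hb
    by_contra hne
    rcases lt_or_gt_of_ne hne with h | h
    · exact ha.2 b (Finset.mem_Ioc.mpr ⟨h, by omega⟩) hfab.symm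
    · exact hb.2 a (Finset.mem_Ioc.mpr ⟨h, by omega⟩) hfab
  · intro b hb
    obtain ⟨k0, hk0, hfk0⟩ := Finset.mem_image.mp hb
    set S := (Finset.range (n+1)).filter (fun k => f k = b) with hSdef
    have hS : S.Nonempty := ⟨k0, by simp [hSdef, hk0, hfk0]⟩
    have hmem := S.max'_mem hS
    simp only [hSdef, Finset.mem_filter] at hmem
    refine ⟨S.max' hS, Finset.mem_filter.mpr ⟨hmem.1, ?_⟩, hmem.2⟩
    intro j hj hfj
    have hjS : j ∈ S := Finset.mem_filter.mpr
      ⟨Finset.mem_range.mpr (by have := Finset.mem_Ioc.mp hj; omega), by rw [hfj, hmem.2]⟩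
    have := Finset.le_max' S j hjS
    have := Finset.mem_Ioc.mp hj
    omega

lemma stat_eq {Ω : Type*} [MeasurableSpace Ω] (μ : Measure Ω)
    (Z : ℕ → Ω → ℝ) (hmeas : ∀ n, Measurable (Z n))
    (hstat : HasStationaryIncrements μ Z) {k n : ℕ} (hk : k ≤ n) :
    μ {ω | ∀ j ∈ Finset.Ioc k n, Z j ω ≠ Z k ω}
      = μ {ω | ∀ i ∈ Finset.Icc 1 (n - k), Z i ω ≠ 0} := by
  set S : Set (ℕ → ℝ) := {f | ∀ i ∈ Finset.Icc 1 (n-k), f i ≠ 0} with hSdef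
  have hS : MeasurableSet S := by
    have : S = ⋂ i ∈ Finset.Icc 1 (n-k), {f : ℕ → ℝ | f i ≠ 0} := by
      ext f; simp [hSdef]
    rw [this]
    exact MeasurableSet.biInter (Finset.Icc 1 (n-k)).countable_toSet
      (fun i _ => by
        have : {f : ℕ → ℝ | f i ≠ 0} = (fun f : ℕ → ℝ => f i) ⁻¹' ({0}ᶜ) := by
          ext f; simp
        rw [this]
        exact (measurable_pi_apply i) (measurableSet_singleton (0:ℝ)).compl)
  have hFmeas : Measurable (fun ω => fun i => Z (i + k) ω - Z k ω) :=
    measurable_pi_lambda _ (fun i => (hmeas (i+k)).sub (hmeas k))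
  have hGmeas : Measurable (fun ω => fun i => Z i ω) :=
    measurable_pi_lambda _ (fun i => hmeas i)
  have h1 : {ω | ∀ j ∈ Finset.Ioc k n, Z j ω ≠ Z k ω}
      = (fun ω => fun i => Z (i + k) ω - Z k ω) ⁻¹' S := by
    ext ω
    simp only [Set.mem_setOf_eq, Set.mem_preimage, hSdef, Finset.mem_Ioc, Finset.mem_Icc]
    constructor
    · intro h i hi
      exact sub_ne_zero_of_ne (h (i + k) ⟨by omega, by omega⟩)
    · intro h j hj
      have := h (j - k) ⟨by omega, by omega⟩
      have hj' : j - k + k = j := by omega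
      rw [hj'] at this
      exact sub_ne_zero.mp this
  have h2 : {ω | ∀ i ∈ Finset.Icc 1 (n-k), Z i ω ≠ 0}
      = (fun ω => fun i => Z i ω) ⁻¹' S := rfl
  rw [h1, h2, ← Measure.map_apply hFmeas hS, ← Measure.map_apply hGmeas hS, hstat k]

lemma Eformula {Ω : Type*} [MeasurableSpace Ω] (μ : Measure Ω) [IsProbabilityMeasure μ]
    (Z : ℕ → Ω → ℝ)
    (hA : ∀ k n : ℕ, MeasurableSet {ω | ∀ j ∈ Finset.Ioc k n, Z j ω ≠ Z k ω})
    (n : ℕ) :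
    ∫ ω, (((Finset.Icc 0 n).image (fun k => Z k ω)).card : ℝ) ∂μ
      = ∑ k ∈ Finset.range (n+1),
          (μ {ω | ∀ j ∈ Finset.Ioc k n, Z j ω ≠ Z k ω}).toReal := by
  classical
  have hIcc : Finset.Icc 0 n = Finset.range (n+1) := by
    ext x; simp [Nat.lt_succ_iff]
  have hcard : ∀ ω, (((Finset.Icc 0 n).image (fun k => Z k ω)).card : ℝ)
      = ∑ k ∈ Finset.range (n+1),
          Set.indicator {ω' | ∀ j ∈ Finset.Ioc k n, Z j ω' ≠ Z k ω'} (fun _ => (1:ℝ)) ω := by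
    intro ω
    rw [hIcc, card_image_last (fun k => Z k ω) n, Finset.card_filter]
    push_cast
    refine Finset.sum_congr rfl fun k _ => ?_
    by_cases h : ∀ j ∈ Finset.Ioc k n, Z j ω ≠ Z k ω <;>
      simp [h, Set.indicator_apply]
  simp_rw [hcard]
  rw [integral_finset_sum _ (fun k _ => (integrable_const (1:ℝ)).indicator (hA k n))]
  refine Finset.sum_congr rfl fun k _ => ?_
  rw [integral_indicator_const (1:ℝ) (hA k n)]
  simp
  rfl

/-- If `0 < liminf E[R_n]/a_n ≤ limsup E[R_n]/a_n < ∞`, then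
`0 < liminf (n/a_n) P(T_0 > n) ≤ limsup (n/a_n) P(T_0 > n) < ∞`.
"`limsup < ∞`" is expressed as eventual boundedness from above. -/
theorem stmt4 {Ω : Type*} [MeasurableSpace Ω] (μ : Measure Ω) [IsProbabilityMeasure μ]
    (Z : ℕ → Ω → ℝ) (hmeas : ∀ n, Measurable (Z n)) (hZ0 : ∀ ω, Z 0 ω = 0)
    (hZint : ∀ n ω, ∃ m : ℤ, Z n ω = m)
    (hstat : HasStationaryIncrements μ Z)
    (a : ℕ → ℝ) (hapos : ∀ n, 0 < a n)
    (γ : ℝ) (hγ : γ ∈ Set.Ioo (0:ℝ) 1) (hreg : RegularlyVarying a γ)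
    (hlow : 0 < atTop.liminf
      (fun n : ℕ => (∫ ω, (((Finset.Icc 0 n).image (fun k => Z k ω)).card : ℝ) ∂μ) / a n))
    (hup : IsBoundedUnder (· ≤ ·) atTop
      (fun n : ℕ => (∫ ω, (((Finset.Icc 0 n).image (fun k => Z k ω)).card : ℝ) ∂μ) / a n)) :
    0 < atTop.liminf (fun n : ℕ =>
        (n : ℝ) / a n * (μ {ω | ∀ j ∈ Finset.Icc 1 n, Z j ω ≠ 0}).toReal)
    ∧ IsBoundedUnder (· ≤ ·) atTop (fun n : ℕ =>
        (n : ℝ) / a n * (μ {ω | ∀ j ∈ Finset.Icc 1 n, Z j ω ≠ 0}).toReal) := by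
  classical
  -- measurability of the "last occurrence" events
  have hA : ∀ k n : ℕ, MeasurableSet {ω | ∀ j ∈ Finset.Ioc k n, Z j ω ≠ Z k ω} := by
    intro k n
    have : {ω | ∀ j ∈ Finset.Ioc k n, Z j ω ≠ Z k ω}
        = ⋂ j ∈ Finset.Ioc k n, {ω | Z j ω ≠ Z k ω} := by
      ext ω; simp
    rw [this]
    exact MeasurableSet.biInter (Finset.Ioc k n).countable_toSet
      (fun j _ => (measurableSet_eq_fun (hmeas j) (hmeas k)).compl)
  set p : ℕ → ℝ := fun n => (μ {ω | ∀ j ∈ Finset.Icc 1 n, Z j ω ≠ 0}).toReal with hpdef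
  set E : ℕ → ℝ :=
    fun n => ∫ ω, (((Finset.Icc 0 n).image (fun k => Z k ω)).card : ℝ) ∂μ with hEdef
  -- basic facts about p
  have hpnonneg : ∀ n, 0 ≤ p n := fun n => ENNReal.toReal_nonneg
  have hpanti : ∀ {m n : ℕ}, m ≤ n → p n ≤ p m := by
    intro m n hmn
    refine ENNReal.toReal_mono (measure_ne_top μ _) (measure_mono ?_)
    intro ω h j hj
    exact h j (Finset.mem_Icc.mpr ⟨(Finset.mem_Icc.mp hj).1,
      le_trans (Finset.mem_Icc.mp hj).2 hmn⟩)
  -- E n = ∑_{k=0}^n p k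
  have hEsum : ∀ n, E n = ∑ k ∈ Finset.range (n+1), p k := by
    intro n
    rw [hEdef]
    simp only
    rw [Eformula μ Z hA n]
    have h1 : ∀ k ∈ Finset.range (n+1),
        (μ {ω | ∀ j ∈ Finset.Ioc k n, Z j ω ≠ Z k ω}).toReal = p (n - k) := by
      intro k hk
      rw [stat_eq μ Z hmeas hstat (Nat.lt_succ_iff.mp (Finset.mem_range.mp hk))]
    rw [Finset.sum_congr rfl h1]
    have := Finset.sum_range_reflect (fun k => p k) (n+1)
    simpa using this
  have hEnonneg : ∀ n, 0 ≤ E n := by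
    intro n
    rw [hEsum n]
    exact Finset.sum_nonneg fun k _ => hpnonneg k
  -- difference formula
  have hEdiff : ∀ {m n : ℕ}, m ≤ n →
      E n = E m + ∑ k ∈ Finset.Ico (m+1) (n+1), p k := by
    intro m n hmn
    rw [hEsum n, hEsum m, Finset.range_eq_Ico, Finset.range_eq_Ico]
    exact (Finset.sum_Ico_consecutive p (Nat.zero_le _) (by omega)).symm
  -- lower bound for differences: (n-m) p n ≤ E n - E m
  have hdiff_ge : ∀ {m n : ℕ}, m ≤ n → ((n - m : ℕ) : ℝ) * p n ≤ E n - E m := by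
    intro m n hmn
    rw [hEdiff hmn]
    have : (Finset.Ico (m+1) (n+1)).card • p n ≤ ∑ k ∈ Finset.Ico (m+1) (n+1), p k :=
      Finset.card_nsmul_le_sum _ _ _ (fun k hk =>
        hpanti (by have := Finset.mem_Ico.mp hk; omega))
    rw [Nat.card_Ico, nsmul_eq_mul] at this
    have hc : (n + 1 - (m + 1)) = n - m := by omega
    rw [hc] at this
    linarith
  -- upper bound for differences: E n - E m ≤ (n-m) p m
  have hdiff_le : ∀ {m n : ℕ}, m ≤ n → E n - E m ≤ ((n - m : ℕ) : ℝ) * p m := by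
    intro m n hmn
    rw [hEdiff hmn]
    have : ∑ k ∈ Finset.Ico (m+1) (n+1), p k ≤ (Finset.Ico (m+1) (n+1)).card • p m :=
      Finset.sum_le_card_nsmul _ _ _ (fun k hk =>
        hpanti (by have := Finset.mem_Ico.mp hk; omega))
    rw [Nat.card_Ico, nsmul_eq_mul] at this
    have hc : (n + 1 - (m + 1)) = n - m := by omega
    rw [hc] at this
    linarith
  -- the upper bound
  obtain ⟨C, hC⟩ := hup
  rw [eventually_map] at hC
  have hCnn : 0 ≤ C := by
    obtain ⟨n, hn⟩ := hC.exists
    exact le_trans (div_nonneg (hEnonneg n) (hapos n).le) hn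
  have hqbound : ∀ᶠ n : ℕ in atTop, (n : ℝ) / a n * p n ≤ 2 * C := by
    filter_upwards [hC, eventually_ge_atTop 1] with n hn h1
    set m := n / 2 with hm
    have hmn : m ≤ n := Nat.div_le_self n 2
    have key : ((n - m : ℕ) : ℝ) * p n ≤ E n := by
      have := hdiff_ge hmn
      have := hEnonneg m
      linarith
    have h2 : (n : ℝ) ≤ 2 * ((n - m : ℕ) : ℝ) := by
      have : n ≤ 2 * (n - m) := by omega
      exact_mod_cast this
    have h3 : (n : ℝ) * p n ≤ 2 * E n := by
      calc (n : ℝ) * p n ≤ 2 * ((n - m : ℕ) : ℝ) * p n :=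
            mul_le_mul_of_nonneg_right h2 (hpnonneg n)
        _ ≤ 2 * E n := by nlinarith [hpnonneg n, key]
    have ha := hapos n
    calc (n : ℝ) / a n * p n = ((n : ℝ) * p n) / a n := by ring
      _ ≤ (2 * E n) / a n := by gcongr
      _ = 2 * (E n / a n) := by ring
      _ ≤ 2 * C := by linarith
  have hbdd : IsBoundedUnder (· ≤ ·) atTop (fun n : ℕ =>
      (n : ℝ) / a n * (μ {ω | ∀ j ∈ Finset.Icc 1 n, Z j ω ≠ 0}).toReal) :=
    ⟨2 * C, eventually_map.mpr hqbound⟩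
  refine ⟨?_, hbdd⟩
  -- lower bound
  have hbddbelow : IsBoundedUnder (· ≥ ·) atTop (fun n : ℕ => E n / a n) :=
    ⟨0, eventually_map.mpr (Eventually.of_forall fun n =>
      div_nonneg (hEnonneg n) (hapos n).le)⟩
  have hLpos : 0 < atTop.liminf (fun n : ℕ => E n / a n) := hlow
  set c : ℝ := atTop.liminf (fun n : ℕ => E n / a n) / 2 with hcdef
  have hcpos : 0 < c := by rw [hcdef]; linarith
  have hcev : ∀ᶠ n : ℕ in atTop, c ≤ E n / a n := by
    have := eventually_lt_of_lt_liminf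
      (show c < atTop.liminf (fun n : ℕ => E n / a n) by rw [hcdef]; linarith) hbddbelow
    exact this.mono fun n hn => hn.le
  have htend : Tendsto (fun m : ℕ => ((2:ℝ)^m)^γ) atTop atTop :=
    (tendsto_rpow_atTop hγ.1).comp (tendsto_pow_atTop_atTop_of_one_lt one_lt_two)
  obtain ⟨m, hm⟩ := (htend.eventually_ge_atTop ((C+1)/c + 1)).exists
  set M : ℕ := 2^m with hMdef
  have hMcast : ((M:ℕ):ℝ) = (2:ℝ)^m := by rw [hMdef]; push_cast; ring
  have hMγ : (C+1)/c + 1 ≤ ((M:ℕ):ℝ)^γ := by rw [hMcast]; exact hm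
  have hdivpos : 0 < (C+1)/c := div_pos (by linarith) hcpos
  have hM2 : 2 ≤ M := by
    rcases Nat.lt_or_ge M 2 with h | h
    · exfalso
      have hM1' : M = 1 := by
        have : 0 < M := by rw [hMdef]; positivity
        omega
      rw [hM1'] at hMγ
      norm_num [Real.one_rpow] at hMγ
      linarith
    · exact h
  have hMR2 : (2:ℝ) ≤ (M:ℝ) := by exact_mod_cast hM2
  have hregM := hreg ((M:ℕ):ℝ) (by exact_mod_cast Nat.pos_of_ne_zero (by omega))
  have hfloor : ∀ n : ℕ, ⌊((M:ℕ):ℝ) * (n:ℝ)⌋₊ = M * n := by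
    intro n; rw [← Nat.cast_mul, Nat.floor_natCast]
  have hratio : ∀ᶠ n : ℕ in atTop, ((M:ℝ))^γ - 1 ≤ a (M * n) / a n := by
    have := hregM.eventually (eventually_gt_nhds
      (show ((M:ℝ))^γ - 1 < ((M:ℝ))^γ by linarith))
    refine this.mono fun n hn => ?_
    rw [hfloor n] at hn
    linarith
  have hcevM : ∀ᶠ n : ℕ in atTop, c ≤ E (M * n) / a (M * n) := by
    obtain ⟨N, hN⟩ := eventually_atTop.mp hcev
    refine eventually_atTop.mpr ⟨N, fun n hn => hN (M * n) ?_⟩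
    calc N ≤ n := hn
      _ ≤ M * n := Nat.le_mul_of_pos_left n (by omega)
  have key : ∀ᶠ n : ℕ in atTop, 1/((M:ℝ) - 1) ≤ (n:ℝ)/a n * p n := by
    filter_upwards [hcevM, hratio, hC, eventually_ge_atTop 1] with n h1 h2 h3 h4
    have han := hapos n
    have haMn := hapos (M*n)
    have hnn : n ≤ M * n := Nat.le_mul_of_pos_left n (by omega)
    have hMγ1 : (1:ℝ) ≤ ((M:ℝ))^γ := by linarith
    have e1 : c * (((M:ℝ))^γ - 1) ≤ (E (M*n) / a (M*n)) * (a (M*n) / a n) :=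
      mul_le_mul h1 h2 (by linarith) (div_nonneg (hEnonneg _) haMn.le)
    have e2 : (E (M*n) / a (M*n)) * (a (M*n) / a n) = E (M*n) / a n := by
      field_simp
    have e3 : C + 1 ≤ c * (((M:ℝ))^γ - 1) := by
      have h5 : (C+1)/c ≤ ((M:ℝ))^γ - 1 := by linarith
      calc C + 1 = ((C+1)/c) * c := by field_simp
        _ ≤ (((M:ℝ))^γ - 1) * c := mul_le_mul_of_nonneg_right h5 hcpos.le
        _ = c * (((M:ℝ))^γ - 1) := by ring
    have e4 : C + 1 ≤ E (M*n) / a n := by rw [← e2]; linarith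
    have e6 : 1 ≤ (E (M*n) - E n) / a n := by
      rw [sub_div]; linarith
    have e7 : E (M*n) - E n ≤ ((M*n - n : ℕ):ℝ) * p n := hdiff_le hnn
    have e8 : ((M*n - n : ℕ):ℝ) = ((M:ℝ) - 1) * (n:ℝ) := by
      rw [Nat.cast_sub hnn]
      push_cast
      ring
    have e9 : (1:ℝ) ≤ ((M:ℝ) - 1) * ((n:ℝ) * p n) / a n := by
      calc (1:ℝ) ≤ (E (M*n) - E n)/a n := e6
        _ ≤ (((M:ℝ) - 1) * (n:ℝ) * p n) / a n := by
            rw [← e8]; gcongr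
        _ = ((M:ℝ) - 1) * ((n:ℝ) * p n) / a n := by ring
    have hM1pos : (0:ℝ) < (M:ℝ) - 1 := by linarith
    rw [div_le_iff₀ hM1pos]
    have e10 : ((M:ℝ) - 1) * ((n:ℝ) * p n) / a n
        = ((n:ℝ)/a n * p n) * ((M:ℝ) - 1) := by ring
    linarith [e10 ▸ e9]
  have hcob2 : IsCoboundedUnder (· ≥ ·) atTop
      (fun n : ℕ => (n:ℝ)/a n * p n) := hbdd.isCoboundedUnder_ge
  have hfin := le_liminf_of_le hcob2 key
  have hM1pos : (0:ℝ) < (M:ℝ) - 1 := by linarith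
  calc (0:ℝ) < 1/((M:ℝ) - 1) := by positivity
    _ ≤ _ := hfin
end
end

section
/- Let $(Z_n)_{n\ge 0}$ with $Z_0=0$ be such that, conditionally on a sub-$\sigma$-algebra $\mathcal{F}_0$, the increments $(Z_k - Z_{k-1})_{k\ge 1}$ are positively associated, and the conditional distribution of each increment given $\mathcal{F}_0$ equals the (unconditional) distribution of $Z_1$. Assume also $Z$ has stationary increments. Then for any $m>0$ with $\mathbb{P}(Z_1\le -m)>0$ and all $n\ge 1$: $\mathbb{P}(\max_{1\le \ell\le n} Z_\ell \le -m) \le \mathbb{P}(\max_{1\le \ell\le n} Z_\ell \le 1) \le \mathbb{P}(\max_{1\le\ell\le n} Z_\ell \le -m) / (\mathbb{P}(Z_1\le -m))^{\lfloor 1/m\rfloor + 2}$. -/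
open MeasureTheory Filter Finset

noncomputable section

lemma integrable_of_bdd {Ω : Type*} {mΩ : MeasurableSpace Ω} {μ : Measure Ω}
    [IsFiniteMeasure μ] {f : Ω → ℝ} (hf : Measurable f) (C : ℝ) (hC : ∀ x, |f x| ≤ C) :
    Integrable f μ :=
  Integrable.mono' (integrable_const C) hf.aestronglyMeasurable
    (Filter.Eventually.of_forall fun x => by simpa using hC x)

lemma antitone_assoc {Ω : Type*} {mΩ : MeasurableSpace Ω} (μ : Measure Ω)
    [IsProbabilityMeasure μ] (F0 : MeasurableSpace Ω) (hF0 : F0 ≤ mΩ)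
    (inc : Ω → ℕ → ℝ) (hinc : Measurable[mΩ] inc)
    (hassoc : ∀ f g : (ℕ → ℝ) → ℝ, Monotone f → Monotone g →
      Measurable f → Measurable g →
      (∃ Cf, ∀ x, |f x| ≤ Cf) → (∃ Cg, ∀ x, |g x| ≤ Cg) →
      ∀ᵐ ω ∂μ,
        (μ[fun ω' => f (inc ω')|F0]) ω * (μ[fun ω' => g (inc ω')|F0]) ω
          ≤ (μ[fun ω' => f (inc ω') * g (inc ω')|F0]) ω)
    (f g : (ℕ → ℝ) → ℝ) (hf : Antitone f) (hg : Antitone g)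
    (hfm : Measurable f) (hgm : Measurable g)
    (Cf Cg : ℝ) (hCf : ∀ x, |f x| ≤ Cf) (hCg : ∀ x, |g x| ≤ Cg) :
    ∀ᵐ ω ∂μ,
      (μ[fun ω' => f (inc ω')|F0]) ω * (μ[fun ω' => g (inc ω')|F0]) ω
        ≤ (μ[fun ω' => f (inc ω') * g (inc ω')|F0]) ω := by
  have hCf0 : 0 ≤ Cf := le_trans (abs_nonneg _) (hCf 0)
  have hCg0 : 0 ≤ Cg := le_trans (abs_nonneg _) (hCg 0)
  set F : Ω → ℝ := fun ω => f (inc ω) with hF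
  set G : Ω → ℝ := fun ω => g (inc ω) with hG
  have hFm : Measurable[mΩ] F := hfm.comp hinc
  have hGm : Measurable[mΩ] G := hgm.comp hinc
  have intF : Integrable F μ := integrable_of_bdd hFm Cf fun x => hCf _
  have intG : Integrable G μ := integrable_of_bdd hGm Cg fun x => hCg _
  have intFG : Integrable (fun ω => F ω * G ω) μ := by
    refine integrable_of_bdd (hFm.mul hGm) (Cf * Cg) fun x => ?_
    rw [abs_mul]
    exact mul_le_mul (hCf _) (hCg _) (abs_nonneg _) hCf0
  -- monotone versions
  have h := hassoc (fun x => Cf - f x) (fun x => Cg - g x)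
    (fun x y hxy => sub_le_sub_left (hf hxy) Cf)
    (fun x y hxy => sub_le_sub_left (hg hxy) Cg)
    (measurable_const.sub hfm) (measurable_const.sub hgm)
    ⟨Cf + Cf, fun x => by
      calc |Cf - f x| ≤ |Cf| + |f x| := abs_sub _ _
        _ ≤ Cf + Cf := add_le_add (le_of_eq (abs_of_nonneg hCf0)) (hCf x)⟩
    ⟨Cg + Cg, fun x => by
      calc |Cg - g x| ≤ |Cg| + |g x| := abs_sub _ _
        _ ≤ Cg + Cg := add_le_add (le_of_eq (abs_of_nonneg hCg0)) (hCg x)⟩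
  -- condexp identities
  have e1 : (μ[fun ω' => Cf - f (inc ω')|F0]) =ᵐ[μ] fun ω => Cf - (μ[F|F0]) ω := by
    have h2 := condExp_sub (m := F0) (μ := μ) (integrable_const Cf) intF
    refine h2.trans ?_
    rw [condExp_const hF0]
    rfl
  have e2 : (μ[fun ω' => Cg - g (inc ω')|F0]) =ᵐ[μ] fun ω => Cg - (μ[G|F0]) ω := by
    have h2 := condExp_sub (m := F0) (μ := μ) (integrable_const Cg) intG
    refine h2.trans ?_
    rw [condExp_const hF0]
    rfl
  -- product expansion
  have intu : Integrable (fun ω => Cf * G ω + Cg * F ω) μ :=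
    (intG.const_mul Cf).add (intF.const_mul Cg)
  have intv : Integrable (fun ω => Cf * Cg + F ω * G ω) μ :=
    (integrable_const _).add intFG
  have eu : (μ[fun ω => Cf * G ω + Cg * F ω|F0]) =ᵐ[μ]
      fun ω => Cf * (μ[G|F0]) ω + Cg * (μ[F|F0]) ω := by
    refine (condExp_add (m := F0) (intG.const_mul Cf) (intF.const_mul Cg)).trans ?_
    have hA : (μ[fun ω => Cf * G ω|F0]) =ᵐ[μ] fun ω => Cf * (μ[G|F0]) ω := by
      simpa [smul_eq_mul, Pi.smul_def] using condExp_smul (m := F0) (μ := μ) Cf G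
    have hB : (μ[fun ω => Cg * F ω|F0]) =ᵐ[μ] fun ω => Cg * (μ[F|F0]) ω := by
      simpa [smul_eq_mul, Pi.smul_def] using condExp_smul (m := F0) (μ := μ) Cg F
    filter_upwards [hA, hB] with ω h1 h2
    simp only [Pi.add_apply, h1, h2]
  have ev : (μ[fun ω => Cf * Cg + F ω * G ω|F0]) =ᵐ[μ]
      fun ω => Cf * Cg + (μ[fun ω => F ω * G ω|F0]) ω := by
    refine (condExp_add (m := F0) (integrable_const _) intFG).trans ?_
    rw [condExp_const hF0]
    filter_upwards with ω
    simp
  have e3 : (μ[fun ω' => (Cf - f (inc ω')) * (Cg - g (inc ω'))|F0]) =ᵐ[μ]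
      fun ω => Cf * Cg + (μ[fun ω => F ω * G ω|F0]) ω
        - (Cf * (μ[G|F0]) ω + Cg * (μ[F|F0]) ω) := by
    have heq : (fun ω' => (Cf - f (inc ω')) * (Cg - g (inc ω')))
        = fun ω => (Cf * Cg + F ω * G ω) - (Cf * G ω + Cg * F ω) := by
      funext ω; simp only [hF, hG]; ring
    rw [heq]
    refine (condExp_sub (m := F0) intv intu).trans ?_
    filter_upwards [eu, ev] with ω h1 h2
    simp only [Pi.sub_apply, h1, h2]
  filter_upwards [h, e1, e2, e3] with ω h0 h1 h2 h3
  rw [h1, h2] at h0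
  rw [h3] at h0
  nlinarith [h0]

lemma ind_bound (S : Set (ℕ → ℝ)) (x : ℕ → ℝ) : |S.indicator (fun _ => (1:ℝ)) x| ≤ 1 := by
  classical
  rw [Set.indicator_apply]; split_ifs <;> norm_num

lemma ind_nonneg (S : Set (ℕ → ℝ)) (x : ℕ → ℝ) : 0 ≤ S.indicator (fun _ => (1:ℝ)) x := by
  classical
  rw [Set.indicator_apply]; split_ifs <;> norm_num

lemma ind_antitone {S : Set (ℕ → ℝ)} (hS : ∀ ⦃x y : ℕ → ℝ⦄, x ≤ y → y ∈ S → x ∈ S) :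
    Antitone (S.indicator (fun _ => (1:ℝ))) := by
  intro x y hxy
  by_cases hy : y ∈ S
  · rw [Set.indicator_of_mem hy, Set.indicator_of_mem (hS hxy hy)]
  · rw [Set.indicator_of_notMem hy]; exact ind_nonneg S x

/-- Transfer of persistence bounds between boundaries `-c` and `+1`, under conditional
positive association of the increments given a sub-σ-algebra `F0`, the conditional
distribution of each increment given `F0` being the (unconditional) law of `Z_1`. -/
theorem stmt6 {Ω : Type*} {mΩ : MeasurableSpace Ω} (μ : Measure Ω) [IsProbabilityMeasure μ]
    (Z : ℕ → Ω → ℝ) (hmeas : ∀ n, Measurable (Z n)) (hZ0 : ∀ ω, Z 0 ω = 0)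
    (hstat : HasStationaryIncrements μ Z)
    (F0 : MeasurableSpace Ω) (hF0 : F0 ≤ mΩ)
    -- conditional positive association of the increments given `F0`
    (hassoc : ∀ f g : (ℕ → ℝ) → ℝ, Monotone f → Monotone g →
      Measurable f → Measurable g →
      (∃ Cf, ∀ x, |f x| ≤ Cf) → (∃ Cg, ∀ x, |g x| ≤ Cg) →
      ∀ᵐ ω ∂μ,
        (μ[fun ω' => f (fun k => Z (k + 1) ω' - Z k ω')|F0]) ω
          * (μ[fun ω' => g (fun k => Z (k + 1) ω' - Z k ω')|F0]) ω
        ≤ (μ[fun ω' => f (fun k => Z (k + 1) ω' - Z k ω')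
              * g (fun k => Z (k + 1) ω' - Z k ω')|F0]) ω)
    -- the conditional distribution of each increment given `F0` is the law of `Z_1`
    (hconddist : ∀ k : ℕ, ∀ t : ℝ,
      (μ[Set.indicator {ω' | Z (k + 1) ω' - Z k ω' ≤ t} (fun _ => (1 : ℝ))|F0])
        =ᵐ[μ] fun _ => (μ {ω' | Z 1 ω' ≤ t}).toReal)
    (c : ℝ) (hc : 0 < c) (hpos : 0 < (μ {ω | Z 1 ω ≤ -c}).toReal)
    (n : ℕ) (hn : 1 ≤ n) :
    (μ {ω | ∀ ℓ ∈ Finset.Icc 1 n, Z ℓ ω ≤ -c}).toReal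
        ≤ (μ {ω | ∀ ℓ ∈ Finset.Icc 1 n, Z ℓ ω ≤ 1}).toReal
    ∧ (μ {ω | ∀ ℓ ∈ Finset.Icc 1 n, Z ℓ ω ≤ 1}).toReal
        ≤ (μ {ω | ∀ ℓ ∈ Finset.Icc 1 n, Z ℓ ω ≤ -c}).toReal
            / ((μ {ω | Z 1 ω ≤ -c}).toReal) ^ (⌊1 / c⌋₊ + 2) := by
  classical
  letI : MeasurableSpace Ω := mΩ
  have hsub : {ω | ∀ ℓ ∈ Finset.Icc 1 n, Z ℓ ω ≤ -c}
      ⊆ {ω | ∀ ℓ ∈ Finset.Icc 1 n, Z ℓ ω ≤ 1} := by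
    intro ω hω ℓ hℓ
    exact le_trans (hω ℓ hℓ) (by linarith)
  refine ⟨ENNReal.toReal_mono (measure_ne_top μ _) (measure_mono hsub), ?_⟩
  set p := (μ {ω | Z 1 ω ≤ -c}).toReal with hp_def
  set K := ⌊1 / c⌋₊ + 2 with hK_def
  have hppos : 0 < p := hpos
  set inc : Ω → ℕ → ℝ := fun ω k => Z (k + 1) ω - Z k ω with hinc_def
  have hincm : Measurable[mΩ] inc :=
    measurable_pi_lambda _ fun k => (hmeas (k + 1)).sub (hmeas k)
  -- the decreasing events
  set S : ℕ → Set (ℕ → ℝ) := fun j =>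
    {x | (∀ i ∈ Finset.range j, x i ≤ -c) ∧
      ∀ ℓ ∈ Finset.Icc 1 n, ∑ k ∈ Finset.Ico K (K + ℓ), x k ≤ 1} with hS_def
  have hSmeas : ∀ j, MeasurableSet (S j) := by
    intro j
    have h1 : MeasurableSet {x : ℕ → ℝ | ∀ i ∈ Finset.range j, x i ≤ -c} := by
      have : {x : ℕ → ℝ | ∀ i ∈ Finset.range j, x i ≤ -c}
          = ⋂ i ∈ Finset.range j, {x : ℕ → ℝ | x i ≤ -c} := by ext x; simp
      rw [this]
      exact MeasurableSet.biInter (Finset.range j).countable_toSet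
        fun i _ => measurableSet_le (measurable_pi_apply i) measurable_const
    have h2 : MeasurableSet {x : ℕ → ℝ |
        ∀ ℓ ∈ Finset.Icc 1 n, ∑ k ∈ Finset.Ico K (K + ℓ), x k ≤ 1} := by
      have : {x : ℕ → ℝ | ∀ ℓ ∈ Finset.Icc 1 n, ∑ k ∈ Finset.Ico K (K + ℓ), x k ≤ 1}
          = ⋂ ℓ ∈ Finset.Icc 1 n, {x : ℕ → ℝ | ∑ k ∈ Finset.Ico K (K + ℓ), x k ≤ 1} := by
        ext x; simp
      rw [this]
      exact MeasurableSet.biInter (Finset.Icc 1 n).countable_toSet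
        fun ℓ _ => measurableSet_le (Finset.measurable_sum _ fun k _ => measurable_pi_apply k)
          measurable_const
    exact (h1.inter h2)
  have hSdown : ∀ j, ∀ ⦃x y : ℕ → ℝ⦄, x ≤ y → y ∈ S j → x ∈ S j := by
    intro j x y hxy hy
    exact ⟨fun i hi => le_trans (hxy i) (hy.1 i hi),
      fun ℓ hℓ => le_trans (Finset.sum_le_sum fun k _ => hxy k) (hy.2 ℓ hℓ)⟩
  set H : ℕ → (ℕ → ℝ) → ℝ := fun j => (S j).indicator (fun _ => (1:ℝ)) with hH_def
  have hHmeas : ∀ j, Measurable (H j) := fun j => measurable_const.indicator (hSmeas j)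
  have hHanti : ∀ j, Antitone (H j) := fun j => ind_antitone (hSdown j)
  -- multiplicative step identity
  have hSsucc : ∀ j, S (j + 1) = {x : ℕ → ℝ | x j ≤ -c} ∩ S j := by
    intro j
    ext y
    simp only [hS_def, Set.mem_setOf_eq, Set.mem_inter_iff, Finset.range_add_one,
      Finset.forall_mem_insert]
    tauto
  have hmul : ∀ j x, H (j + 1) x
      = ({x : ℕ → ℝ | x j ≤ -c}).indicator (fun _ => (1:ℝ)) x * H j x := by
    intro j x
    by_cases h1 : x ∈ {x : ℕ → ℝ | x j ≤ -c} <;> by_cases h2 : x ∈ S j <;>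
      simp [hH_def, Set.indicator_apply, hSsucc, Set.mem_inter_iff, h1, h2]
  -- conditional expectation of a single increment indicator
  have keyA : ∀ i : ℕ,
      (μ[fun ω' => ({x : ℕ → ℝ | x i ≤ -c}).indicator (fun _ => (1:ℝ)) (inc ω')|F0])
        =ᵐ[μ] fun _ => p := by
    intro i
    have hfe : (fun ω' => ({x : ℕ → ℝ | x i ≤ -c}).indicator (fun _ => (1:ℝ)) (inc ω'))
        = Set.indicator {ω' | Z (i + 1) ω' - Z i ω' ≤ -c} (fun _ => (1:ℝ)) := by
      funext ω
      simp only [Set.indicator_apply, Set.mem_setOf_eq, hinc_def]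
    rw [hfe]
    exact hconddist i (-c)
  -- one association step
  have step : ∀ j, ∀ᵐ ω ∂μ,
      p * (μ[fun ω' => H j (inc ω')|F0]) ω ≤ (μ[fun ω' => H (j + 1) (inc ω')|F0]) ω := by
    intro j
    have hA := antitone_assoc μ F0 hF0 inc hincm hassoc
      (({x : ℕ → ℝ | x j ≤ -c}).indicator (fun _ => (1:ℝ))) (H j)
      (ind_antitone fun x y hxy hy => le_trans (hxy j) hy) (hHanti j)
      (measurable_const.indicator
        (measurableSet_le (measurable_pi_apply j) measurable_const)) (hHmeas j)
      1 1 (ind_bound _) (ind_bound _)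
    have hfun : (fun ω' => ({x : ℕ → ℝ | x j ≤ -c}).indicator (fun _ => (1:ℝ)) (inc ω')
          * H j (inc ω'))
        = fun ω' => H (j + 1) (inc ω') := by
      funext ω'; exact (hmul j (inc ω')).symm
    rw [hfun] at hA
    filter_upwards [hA, keyA j] with ω h1 h2
    rw [← h2]
    exact h1
  -- iterate
  have key : ∀ j, ∀ᵐ ω ∂μ,
      p ^ j * (μ[fun ω' => H 0 (inc ω')|F0]) ω ≤ (μ[fun ω' => H j (inc ω')|F0]) ω := by
    intro j
    induction j with
    | zero => filter_upwards with ω; simp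
    | succ j ih =>
      filter_upwards [ih, step j] with ω h1 h2
      calc p ^ (j + 1) * (μ[fun ω' => H 0 (inc ω')|F0]) ω
          = p * (p ^ j * (μ[fun ω' => H 0 (inc ω')|F0]) ω) := by ring
        _ ≤ p * (μ[fun ω' => H j (inc ω')|F0]) ω :=
            mul_le_mul_of_nonneg_left h1 hppos.le
        _ ≤ _ := h2
  -- integrate
  have intH : ∀ j, Integrable (fun ω => H j (inc ω)) μ := fun j =>
    integrable_of_bdd ((hHmeas j).comp hincm) 1 fun ω => ind_bound _ _
  have hintegral : p ^ K * ∫ ω, H 0 (inc ω) ∂μ ≤ ∫ ω, H K (inc ω) ∂μ := by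
    have h1 : ∫ ω, p ^ K * (μ[fun ω' => H 0 (inc ω')|F0]) ω ∂μ
        ≤ ∫ ω, (μ[fun ω' => H K (inc ω')|F0]) ω ∂μ :=
      integral_mono_ae (integrable_condExp.const_mul _) integrable_condExp (key K)
    rwa [integral_const_mul, integral_condExp hF0, integral_condExp hF0] at h1
  have hint_eq : ∀ j, ∫ ω, H j (inc ω) ∂μ = (μ (inc ⁻¹' S j)).toReal := by
    intro j
    have heq : (fun ω => H j (inc ω)) = (inc ⁻¹' S j).indicator (fun _ => (1:ℝ)) := by
      funext ω
      simp [hH_def, Set.indicator_apply, Set.mem_preimage]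
    rw [heq, integral_indicator_const (μ := μ) (1:ℝ) (hincm (hSmeas j))]
    simp [Measure.real]
  -- telescoping sums
  have tele : ∀ (ω : Ω) (a b : ℕ), a ≤ b → ∑ k ∈ Finset.Ico a b, inc ω k = Z b ω - Z a ω := by
    intro ω a b hab
    simp only [hinc_def]
    rw [Finset.sum_Ico_eq_sub _ hab, Finset.sum_range_sub (fun k => Z k ω),
      Finset.sum_range_sub (fun k => Z k ω)]
    ring
  have hZsum : ∀ (ω : Ω) (b : ℕ), Z b ω = ∑ k ∈ Finset.Ico 0 b, inc ω k := by
    intro ω b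
    rw [tele ω 0 b (Nat.zero_le b), hZ0]
    ring
  -- inclusion of the key event in the target event
  have hsubset : inc ⁻¹' S K ⊆ {ω | ∀ ℓ ∈ Finset.Icc 1 n, Z ℓ ω ≤ -c} := by
    intro ω hω
    obtain ⟨h1, h2⟩ := hω
    intro ℓ hℓ
    rw [Finset.mem_Icc] at hℓ
    have hneg : ∀ j : ℕ, j ≤ K → Z j ω ≤ (j : ℝ) * (-c) := by
      intro j hj
      rw [hZsum ω j]
      calc ∑ k ∈ Finset.Ico 0 j, inc ω k ≤ ∑ _k ∈ Finset.Ico 0 j, (-c) :=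
          Finset.sum_le_sum fun k hk => h1 k (by
            simp only [Finset.mem_Ico] at hk
            exact Finset.mem_range.mpr (lt_of_lt_of_le hk.2 hj))
        _ = (j : ℝ) * (-c) := by simp [Finset.sum_const, Nat.card_Ico]
    by_cases hcase : ℓ ≤ K
    · have hb := hneg ℓ hcase
      have hl1 : (1 : ℝ) ≤ (ℓ : ℝ) := by exact_mod_cast hℓ.1
      nlinarith
    · push_neg at hcase
      have hZK := hneg K le_rfl
      have hdiff : Z ℓ ω - Z K ω ≤ 1 := by
        have hmem : ℓ - K ∈ Finset.Icc 1 n := Finset.mem_Icc.mpr ⟨by omega, by omega⟩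
        have h3 := h2 (ℓ - K) hmem
        rw [show K + (ℓ - K) = ℓ by omega] at h3
        calc Z ℓ ω - Z K ω = ∑ k ∈ Finset.Ico K ℓ, inc ω k := (tele ω K ℓ hcase.le).symm
          _ ≤ 1 := h3
      have hfloor : (1 : ℝ) / c < (⌊1 / c⌋₊ : ℝ) + 1 := Nat.lt_floor_add_one _
      have hKc : (K : ℝ) = (⌊1 / c⌋₊ : ℝ) + 2 := by rw [hK_def]; push_cast; ring
      have hfc : (1 : ℝ) / c * c = 1 := div_mul_cancel₀ 1 hc.ne'
      have hgt : 1 < ((⌊1 / c⌋₊ : ℝ) + 1) * c := by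
        calc (1 : ℝ) = 1 / c * c := hfc.symm
          _ < ((⌊1 / c⌋₊ : ℝ) + 1) * c := by
              exact mul_lt_mul_of_pos_right hfloor hc
      nlinarith [hZK, hdiff]
  -- measure of the 0-th event by stationarity
  have hB : μ (inc ⁻¹' S 0) = μ {ω | ∀ ℓ ∈ Finset.Icc 1 n, Z ℓ ω ≤ 1} := by
    set T : Set (ℕ → ℝ) := {f | ∀ ℓ ∈ Finset.Icc 1 n, f ℓ ≤ 1} with hT_def
    have hTmeas : MeasurableSet T := by
      have : T = ⋂ ℓ ∈ Finset.Icc 1 n, {f : ℕ → ℝ | f ℓ ≤ 1} := by ext f; simp [hT_def]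
      rw [this]
      exact MeasurableSet.biInter (Finset.Icc 1 n).countable_toSet
        fun ℓ _ => measurableSet_le (measurable_pi_apply ℓ) measurable_const
    have hmeas2 : Measurable[mΩ] (fun ω => fun m => Z (m + K) ω - Z K ω) :=
      measurable_pi_lambda _ fun m => (hmeas (m + K)).sub (hmeas K)
    have hmeasp : Measurable[mΩ] (fun ω => fun m => Z m ω) :=
      measurable_pi_lambda _ fun m => hmeas m
    have hpre1 : inc ⁻¹' S 0 = (fun ω => fun m => Z (m + K) ω - Z K ω) ⁻¹' T := by
      ext ω
      simp only [Set.mem_preimage, hS_def, Set.mem_setOf_eq, hT_def]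
      constructor
      · rintro ⟨-, h2⟩ ℓ hℓ
        have h3 := h2 ℓ hℓ
        rwa [tele ω K (K + ℓ) (Nat.le_add_right K ℓ), show K + ℓ = ℓ + K by omega] at h3
      · intro h
        refine ⟨by simp, fun ℓ hℓ => ?_⟩
        rw [tele ω K (K + ℓ) (Nat.le_add_right K ℓ), show K + ℓ = ℓ + K by omega]
        exact h ℓ hℓ
    have hpre2 : (fun ω => fun m => Z m ω) ⁻¹' T
        = {ω | ∀ ℓ ∈ Finset.Icc 1 n, Z ℓ ω ≤ 1} := by
      ext ω; simp [hT_def]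
    rw [hpre1, ← Measure.map_apply hmeas2 hTmeas, hstat K,
      Measure.map_apply hmeasp hTmeas, hpre2]
  -- combine
  have final : p ^ K * (μ {ω | ∀ ℓ ∈ Finset.Icc 1 n, Z ℓ ω ≤ 1}).toReal
      ≤ (μ {ω | ∀ ℓ ∈ Finset.Icc 1 n, Z ℓ ω ≤ -c}).toReal := by
    calc p ^ K * (μ {ω | ∀ ℓ ∈ Finset.Icc 1 n, Z ℓ ω ≤ 1}).toReal
        = p ^ K * (μ (inc ⁻¹' S 0)).toReal := by rw [hB]
      _ = p ^ K * ∫ ω, H 0 (inc ω) ∂μ := by rw [hint_eq 0]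
      _ ≤ ∫ ω, H K (inc ω) ∂μ := hintegral
      _ = (μ (inc ⁻¹' S K)).toReal := hint_eq K
      _ ≤ (μ {ω | ∀ ℓ ∈ Finset.Icc 1 n, Z ℓ ω ≤ -c}).toReal :=
          ENNReal.toReal_mono (measure_ne_top μ _) (measure_mono hsubset)
  rw [le_div_iff₀ (pow_pos hppos K)]
  linarith [final]
end
end
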